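/- Let S be a finite nonempty set, g, h : S → ℍ, and ε, ε', ε₀ > 0 with ε' < ε₀·ε. Let x, y ∈ S satisfy g_x ≠ h_x, g_y ≠ h_y, Im g_y ≤ ε'·Im g_x, γ(g_y, h_y) ≥ ε·γ(g_x, h_x), and Im h_y ≥ ε₀·Im h_x. Then Q_{x,y} ≤ 2√(ε₀ ε ε')/(ε₀ ε + ε') < 1. -/

import Mathlib

/-- The hyperbolic semi-metric `γ(g,h) = |g-h|² / (Im g · Im h)` on the upper half plane. -/
noncomputable def gam (g h : ℂ) : ℝ := ‖g - h‖ ^ 2 / (g.im * h.im)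

/-- `Q_{x,y}` formed from the values `g_x, h_x, g_y, h_y`. -/
noncomputable def Qquot (gx hx gy hy : ℂ) : ℝ :=
  if gx ≠ hx ∧ gy ≠ hy then
    Real.sqrt (gx.im * gy.im * hx.im * hy.im * gam gx hx * gam gy hy) /
      ((1 / 2) * (gx.im * hy.im * gam gy hy + gy.im * hx.im * gam gx hx))
  else 0

set_option maxHeartbeats 1000000 in
theorem geometric_arithmetic_mean_estimate
    {S : Type*} [Fintype S] [Nonempty S]
    (g h : S → ℂ) (hg : ∀ u, 0 < (g u).im) (hh : ∀ u, 0 < (h u).im)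
    (ε ε' ε₀ : ℝ) (hε : 0 < ε) (hε' : 0 < ε') (hε₀ : 0 < ε₀)
    (hlt : ε' < ε₀ * ε)
    (x y : S)
    (hx : g x ≠ h x) (hy : g y ≠ h y)
    (hIm : (g y).im ≤ ε' * (g x).im)
    (hgam : ε * gam (g x) (h x) ≤ gam (g y) (h y))
    (hImh : ε₀ * (h x).im ≤ (h y).im) :
    Qquot (g x) (h x) (g y) (h y) ≤ 2 * Real.sqrt (ε₀ * ε * ε') / (ε₀ * ε + ε') ∧
      2 * Real.sqrt (ε₀ * ε * ε') / (ε₀ * ε + ε') < 1 := by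
  have hgx : 0 < (g x).im := hg x
  have hgy : 0 < (g y).im := hg y
  have hhx : 0 < (h x).im := hh x
  have hhy : 0 < (h y).im := hh y
  have habsx : 0 < ‖g x - h x‖ := norm_pos_iff.mpr (sub_ne_zero.mpr hx)
  have habsy : 0 < ‖g y - h y‖ := norm_pos_iff.mpr (sub_ne_zero.mpr hy)
  have hγx : 0 < gam (g x) (h x) := div_pos (pow_pos habsx 2) (mul_pos hgx hhx)
  have hγy : 0 < gam (g y) (h y) := div_pos (pow_pos habsy 2) (mul_pos hgy hhy)
  set p := ε₀ * ε with hp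
  set q := ε' with hq
  have hp0 : 0 < p := by positivity
  have hq0 : 0 < q := hε'
  have hqp : q < p := hlt
  set u := (g x).im * (h y).im * gam (g y) (h y) with hu
  set v := (g y).im * (h x).im * gam (g x) (h x) with hv
  have hu0 : 0 < u := mul_pos (mul_pos hgx hhy) hγy
  have hv0 : 0 < v := mul_pos (mul_pos hgy hhx) hγx
  have hpv : p * v ≤ q * u := by
    have e1 : p * v = (ε * gam (g x) (h x)) * (ε₀ * (h x).im) * (g y).im := by
      rw [hv, hp]; ring
    have e2 : q * u = gam (g y) (h y) * (h y).im * (q * (g x).im) := by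
      rw [hu]; ring
    rw [e1, e2]
    have h1 : (ε * gam (g x) (h x)) * (ε₀ * (h x).im) ≤ gam (g y) (h y) * (h y).im :=
      mul_le_mul hgam hImh (by positivity) hγy.le
    exact mul_le_mul h1 hIm hgy.le (by positivity)
  have hqv : q * v ≤ p * u := by nlinarith [mul_le_mul_of_nonneg_left hpv hq0.le]
  have key : u * v * (p + q) ^ 2 ≤ p * q * (u + v) ^ 2 := by
    have h1 : 0 ≤ q * u - p * v := by linarith
    have h2 : 0 ≤ p * u - q * v := by linarith
    nlinarith [mul_nonneg h1 h2]
  have hsq : Real.sqrt (u * v) * (p + q) ≤ Real.sqrt (p * q) * (u + v) := by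
    have h1 := Real.sqrt_le_sqrt key
    rwa [Real.sqrt_mul (by positivity) ((p + q) ^ 2),
      Real.sqrt_mul (by positivity) ((u + v) ^ 2),
      Real.sqrt_sq (by positivity), Real.sqrt_sq (by positivity)] at h1
  constructor
  · rw [Qquot, if_pos ⟨hx, hy⟩]
    have hnum : (g x).im * (g y).im * (h x).im * (h y).im * gam (g x) (h x) * gam (g y) (h y)
        = u * v := by rw [hu, hv]; ring
    have hden : (1 : ℝ) / 2 * ((g x).im * (h y).im * gam (g y) (h y)
        + (g y).im * (h x).im * gam (g x) (h x)) = (u + v) / 2 := by rw [hu, hv]; ring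
    rw [hnum, hden]
    rw [div_le_div_iff₀ (by positivity) (by positivity)]
    nlinarith [hsq]
  · rw [div_lt_one (by positivity)]
    have hd : 0 < (p - q) ^ 2 := pow_pos (sub_pos.mpr hqp) 2
    have hlt3 : p * q < ((p + q) / 2) ^ 2 := by nlinarith
    have hlt2 : Real.sqrt (p * q) < (p + q) / 2 := by
      have := Real.sqrt_lt_sqrt (mul_nonneg hp0.le hq0.le) hlt3
      rwa [Real.sqrt_sq (by positivity)] at this
    linarith
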